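/- Let H = ℤ² ⋊ ℤ be the semidirect product in which the generator of ℤ acts on ℤ² by the matrix U = !![0,1;1,3]. Then H is residually nilpotent: ⋂_{n∈ℕ} γ_n(H) = 1. -/

import Mathlib

namespace ZZrtimesZ

/-- The matrix `U = !![0,1;1,3] ∈ GL₂(ℤ)`. -/
def U : Matrix (Fin 2) (Fin 2) ℤ := !![0, 1; 1, 3]

/-- The automorphism of `ℤ²` given by the matrix `U` (its inverse is given by
`U⁻¹ = !![-3,1;1,0]`, since `det U = -1`). -/
def Uaut : (Fin 2 → ℤ) ≃+ (Fin 2 → ℤ) where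
  toFun v := U.mulVec v
  invFun v := (!![-3, 1; 1, 0] : Matrix (Fin 2) (Fin 2) ℤ).mulVec v
  left_inv v := by
    show (!![-3, 1; 1, 0] : Matrix (Fin 2) (Fin 2) ℤ).mulVec (U.mulVec v) = v
    rw [Matrix.mulVec_mulVec,
      show (!![-3, 1; 1, 0] : Matrix (Fin 2) (Fin 2) ℤ) * U = 1 by decide,
      Matrix.one_mulVec]
  right_inv v := by
    show U.mulVec ((!![-3, 1; 1, 0] : Matrix (Fin 2) (Fin 2) ℤ).mulVec v) = v
    rw [Matrix.mulVec_mulVec,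
      show U * (!![-3, 1; 1, 0] : Matrix (Fin 2) (Fin 2) ℤ) = 1 by decide,
      Matrix.one_mulVec]
  map_add' v w := Matrix.mulVec_add U v w

/-- The action of `ℤ` on `ℤ²` in which `1 ∈ ℤ` acts by the matrix `U`. -/
def phi : Multiplicative ℤ →* MulAut (Multiplicative (Fin 2 → ℤ)) :=
  zpowersHom _ (AddEquiv.toMultiplicative Uaut)

/-- The semidirect product `H = ℤ² ⋊ ℤ` where the generator of `ℤ` acts by `U`. -/
abbrev H : Type := SemidirectProduct (Multiplicative (Fin 2 → ℤ)) (Multiplicative ℤ) phi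

open scoped commutatorElement

def M : Matrix (Fin 2) (Fin 2) ℤ := !![-1, 1; 1, 2]
def V : Matrix (Fin 2) (Fin 2) ℤ := !![-3, 1; 1, 0]
def C : Matrix (Fin 2) (Fin 2) ℤ := !![3, -1; -1, 0]

/-- Key lemma: the action of any power of `U` differs from identity by something in `M·ℤ²`,
uniformly via a matrix commuting with `M`. -/
lemma key (m : ℤ) : ∃ Z : Matrix (Fin 2) (Fin 2) ℤ, Z * M = M * Z ∧
    ∀ w : Fin 2 → ℤ,
      Multiplicative.toAdd (((AddEquiv.toMultiplicative Uaut) ^ m)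
        (Multiplicative.ofAdd w)) = w + M.mulVec (Z.mulVec w) := by
  induction m using Int.induction_on with
  | zero =>
    refine ⟨0, by simp, fun w => ?_⟩
    simp [Matrix.mulVec_zero, Matrix.zero_mulVec]
  | succ n ih =>
    obtain ⟨Z, hZ, hw⟩ := ih
    refine ⟨1 + Z * U, ?_, fun w => ?_⟩
    · have hUM : U * M = M * U := by decide
      rw [Matrix.add_mul, Matrix.mul_add, one_mul, mul_one, Matrix.mul_assoc, hUM,
        ← Matrix.mul_assoc, hZ, Matrix.mul_assoc]
    · rw [zpow_add_one]
      have h1 : ((AddEquiv.toMultiplicative Uaut) ^ (n:ℤ) * (AddEquiv.toMultiplicative Uaut))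
          (Multiplicative.ofAdd w)
          = ((AddEquiv.toMultiplicative Uaut) ^ (n:ℤ)) (Multiplicative.ofAdd (U.mulVec w)) := rfl
      rw [h1, hw (U.mulVec w)]
      have hmat : U + M * Z * U = 1 + M * (1 + Z * U) := by
        rw [show U = 1 + M from by decide]; noncomm_ring
      calc U.mulVec w + M.mulVec (Z.mulVec (U.mulVec w))
          = (U + M * Z * U).mulVec w := by
            rw [Matrix.mulVec_mulVec, Matrix.mulVec_mulVec, Matrix.add_mulVec]
        _ = (1 + M * (1 + Z * U)).mulVec w := by rw [hmat]
        _ = w + M.mulVec ((1 + Z * U).mulVec w) := by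
            rw [Matrix.add_mulVec, Matrix.one_mulVec, Matrix.mulVec_mulVec]
  | pred n ih =>
    obtain ⟨Z, hZ, hw⟩ := ih
    refine ⟨C + Z * V, ?_, fun w => ?_⟩
    · have hVM : V * M = M * V := by decide
      have hCM : C * M = M * C := by decide
      rw [Matrix.add_mul, Matrix.mul_add, hCM, Matrix.mul_assoc, hVM, ← Matrix.mul_assoc, hZ,
        Matrix.mul_assoc]
    · rw [zpow_sub_one]
      have h1 : ((AddEquiv.toMultiplicative Uaut) ^ (-n:ℤ) * (AddEquiv.toMultiplicative Uaut)⁻¹)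
          (Multiplicative.ofAdd w)
          = ((AddEquiv.toMultiplicative Uaut) ^ (-n:ℤ)) (Multiplicative.ofAdd (V.mulVec w)) := rfl
      rw [h1, hw (V.mulVec w)]
      have hmat : V + M * Z * V = 1 + M * (C + Z * V) := by
        rw [show V = 1 + M * C from by decide]; noncomm_ring
      calc V.mulVec w + M.mulVec (Z.mulVec (V.mulVec w))
          = (V + M * Z * V).mulVec w := by
            rw [Matrix.mulVec_mulVec, Matrix.mulVec_mulVec, Matrix.add_mulVec]
        _ = (1 + M * (C + Z * V)).mulVec w := by rw [hmat]
        _ = w + M.mulVec ((C + Z * V).mulVec w) := by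
            rw [Matrix.add_mulVec, Matrix.one_mulVec, Matrix.mulVec_mulVec]

/-- The descending chain of subgroups `(M^n ℤ²) ⋊ 1`. -/
def L (n : ℕ) : Subgroup H where
  carrier := {x : H | x.right = 1 ∧
    ∃ w : Fin 2 → ℤ, Multiplicative.toAdd x.left = (M ^ n).mulVec w}
  one_mem' := ⟨rfl, 0, by simp [Matrix.mulVec_zero]⟩
  mul_mem' := by
    rintro x y ⟨hx, wx, hwx⟩ ⟨hy, wy, hwy⟩
    refine ⟨by rw [SemidirectProduct.mul_right, hx, hy, mul_one], wx + wy, ?_⟩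
    rw [SemidirectProduct.mul_left, hx, map_one, MulAut.one_apply, toAdd_mul, hwx, hwy,
      Matrix.mulVec_add]
  inv_mem' := by
    rintro x ⟨hx, w, hw⟩
    refine ⟨by rw [SemidirectProduct.inv_right, hx, inv_one], -w, ?_⟩
    rw [SemidirectProduct.inv_left, hx, inv_one, map_one, MulAut.one_apply, toAdd_inv, hw,
      Matrix.mulVec_neg]

lemma comm_right (x y : H) : ⁅x, y⁆.right = 1 := by
  simp only [commutatorElement_def, SemidirectProduct.mul_right, SemidirectProduct.inv_right]
  rw [mul_comm x.right y.right]
  group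

lemma comm_left (x y : H) (hx : x.right = 1) :
    ⁅x, y⁆.left = x.left * (phi y.right x.left)⁻¹ := by
  simp only [commutatorElement_def, SemidirectProduct.mul_left, SemidirectProduct.mul_right,
    SemidirectProduct.inv_left, SemidirectProduct.inv_right, hx, map_one, map_inv, map_mul,
    one_mul, mul_one, inv_one, MulAut.one_apply]
  rw [MulAut.apply_inv_self, mul_right_comm, mul_inv_cancel_right]

lemma comm_mem_L (n : ℕ) (x y : H) (hx : x ∈ L n) : ⁅x, y⁆ ∈ L (n + 1) := by
  obtain ⟨hx1, w, hw⟩ := hx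
  refine ⟨comm_right x y, ?_⟩
  obtain ⟨Z, hZ, hZw⟩ := key (Multiplicative.toAdd y.right)
  have hphi : phi y.right x.left
      = ((AddEquiv.toMultiplicative Uaut) ^ (Multiplicative.toAdd y.right))
        (Multiplicative.ofAdd (Multiplicative.toAdd x.left)) := rfl
  refine ⟨-(Z.mulVec w), ?_⟩
  rw [comm_left x y hx1, toAdd_mul, toAdd_inv, hphi, hZw, hw]
  have hcomm : Z * M ^ n = M ^ n * Z := (Commute.pow_right hZ n)
  have hmat : M * Z * M ^ n = M ^ (n + 1) * Z := by
    rw [Matrix.mul_assoc, hcomm, ← Matrix.mul_assoc, ← pow_succ']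
  rw [Matrix.mulVec_mulVec, Matrix.mulVec_mulVec, hmat, Matrix.mulVec_neg,
    Matrix.mulVec_mulVec]
  abel

lemma lcs_le (n : ℕ) : (⊤ : Subgroup H).lowerCentralSeries (n + 1) ≤ L n := by
  induction n with
  | zero =>
    rw [show (⊤ : Subgroup H).lowerCentralSeries 1 = ⁅(⊤ : Subgroup H), ⊤⁆ from rfl, Subgroup.commutator_le]
    intro x _ y _
    exact ⟨comm_right x y, Multiplicative.toAdd ⁅x, y⁆.left, by rw [pow_zero, Matrix.one_mulVec]⟩
  | succ n ih =>
    calc (⊤ : Subgroup H).lowerCentralSeries (n + 2) = ⁅(⊤ : Subgroup H).lowerCentralSeries (n + 1), ⊤⁆ := rfl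
      _ ≤ L (n + 1) := by
          rw [Subgroup.commutator_le]
          intro x hx y _
          exact comm_mem_L n x y (ih hx)

/-- The invariant quadratic form `Q(a,b) = a² + 3ab - b²`, satisfying `Q(Mv) = -3·Q(v)`. -/
def Q (v : Fin 2 → ℤ) : ℤ := v 0 * v 0 + 3 * (v 0 * v 1) - v 1 * v 1

lemma Q_mulVec (w : Fin 2 → ℤ) : Q (M.mulVec w) = -3 * Q w := by
  simp [Q, M, Matrix.mulVec, dotProduct, Fin.sum_univ_two]
  ring

lemma Q_pow_mulVec (n : ℕ) (w : Fin 2 → ℤ) : Q ((M ^ n).mulVec w) = (-3) ^ n * Q w := by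
  induction n with
  | zero => rw [pow_zero, Matrix.one_mulVec, pow_zero, one_mul]
  | succ n ih =>
    rw [pow_succ', ← Matrix.mulVec_mulVec, Q_mulVec, ih, pow_succ']
    ring

lemma nat13 : ∀ t s : ℕ, s * s = 13 * (t * t) → t = 0 := by
  intro t
  induction t using Nat.strong_induction_on with
  | _ t ih =>
    intro s h
    rcases Nat.eq_zero_or_pos t with h0 | hpos
    · exact h0
    have hp : Nat.Prime 13 := by norm_num
    have hds : 13 ∣ s := by
      rcases (Nat.Prime.dvd_mul hp).mp ⟨t * t, h⟩ with h' | h' <;> exact h'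
    obtain ⟨u, rfl⟩ := hds
    have h2 : t * t = 13 * (u * u) := by nlinarith
    have hu : u < t := by nlinarith
    have hu0 : u = 0 := ih u hu t h2
    subst hu0
    simpa using h2
  
lemma int13 (s t : ℤ) (h : s ^ 2 = 13 * t ^ 2) : t = 0 := by
  have hn : s.natAbs * s.natAbs = 13 * (t.natAbs * t.natAbs) := by
    have := congrArg Int.natAbs h
    simpa [Int.natAbs_mul, pow_two] using this
  exact Int.natAbs_eq_zero.mp (nat13 t.natAbs s.natAbs hn)

/-- `H = ℤ² ⋊_U ℤ` is residually nilpotent: `⋂_n γ_n(H) = 1`. -/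
theorem H_residually_nilpotent : (⨅ n : ℕ, (⊤ : Subgroup H).lowerCentralSeries n) = ⊥ := by
  rw [eq_bot_iff]
  intro x hx
  rw [Subgroup.mem_iInf] at hx
  have hL : ∀ n : ℕ, x ∈ L n := fun n => lcs_le n (hx (n + 1))
  have hr : x.right = 1 := (hL 0).1
  set v : Fin 2 → ℤ := Multiplicative.toAdd x.left with hv
  have hdvd : ∀ n : ℕ, (3 : ℤ) ^ n ∣ Q v := by
    intro n
    obtain ⟨w, hw⟩ := (hL n).2
    refine ⟨(-1) ^ n * Q w, ?_⟩
    rw [← hv] at hw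
    rw [hw, Q_pow_mulVec, show ((-3 : ℤ)) ^ n = 3 ^ n * (-1) ^ n from by
      rw [← mul_pow]; norm_num]
    ring
  have hQ0 : Q v = 0 := by
    by_contra hne
    obtain ⟨k, hk⟩ := hdvd (Q v).natAbs
    have h1 : (3 : ℤ) ^ (Q v).natAbs ≤ |Q v| :=
      Int.le_of_dvd (abs_pos.mpr hne) ((dvd_abs _ _).mpr (hdvd _))
    have h2 : ((Q v).natAbs : ℤ) < 3 ^ (Q v).natAbs := by
      exact_mod_cast Nat.lt_pow_self (n := (Q v).natAbs) (a := 3) (by norm_num)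
    rw [Int.abs_eq_natAbs] at h1
    omega
  have hb : v 1 = 0 := by
    have h13 : (2 * v 0 + 3 * v 1) ^ 2 = 13 * (v 1) ^ 2 := by
      have : v 0 * v 0 + 3 * (v 0 * v 1) - v 1 * v 1 = 0 := hQ0
      linear_combination 4 * this
    exact int13 _ _ h13
  have ha : v 0 = 0 := by
    have : v 0 * v 0 + 3 * (v 0 * v 1) - v 1 * v 1 = 0 := hQ0
    rw [hb] at this
    have h2 : v 0 * v 0 = 0 := by linear_combination this
    exact mul_self_eq_zero.mp h2
  have hv0 : v = 0 := by
    funext i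
    fin_cases i
    · exact ha
    · exact hb
  have hleft : x.left = 1 := by
    have : Multiplicative.toAdd x.left = Multiplicative.toAdd (1 : Multiplicative (Fin 2 → ℤ)) := by
      rw [← hv, hv0]; rfl
    exact Multiplicative.toAdd.injective this
  rw [Subgroup.mem_bot]
  exact SemidirectProduct.ext hleft hr


end ZZrtimesZ
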